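/- In the pulsed insecticide model, if immediately after a spray event the pest population is (1−θ)·y with 0 < θ < 1, and between sprays the pest evolves according to y' = (β·x/(1+h·x) − δ)·y with x(t) ≤ X_max, then over a time interval of length τ between sprays the pest population multiplies by at most (1−θ)·exp((β·X_max/(1+h·X_max) − δ)·τ); hence if θ > 1 − exp(−(β·X_max/(1+h·X_max) − δ)·τ), the pest population decreases geometrically across spray cycles. -/

import Mathlib

theorem pulsed_spray_geometric_decrease
    (β δ h θ τ Xmax y₀ : ℝ)
    (hβ : 0 < β) (hδ : 0 < δ) (hh : 0 < h) (hτ : 0 < τ) (hX : 0 < Xmax)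
    (hθ0 : 0 < θ) (hθ1 : θ < 1)
    (hgrow : β * Xmax / (1 + h * Xmax) > δ)
    (hy₀ : 0 < y₀)
    (x y : ℝ → ℝ)
    (hxbnd : ∀ t ∈ Set.Icc (0 : ℝ) τ, 0 < x t ∧ x t ≤ Xmax)
    (hy' : ∀ t ∈ Set.Icc (0 : ℝ) τ,
      HasDerivAt y ((β * x t / (1 + h * x t) - δ) * y t) t)
    (hy0 : y 0 = (1 - θ) * y₀) :
    y τ ≤ (1 - θ) * Real.exp ((β * Xmax / (1 + h * Xmax) - δ) * τ) * y₀ ∧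
    (θ > 1 - Real.exp (-((β * Xmax / (1 + h * Xmax) - δ) * τ)) → y τ < y₀) := by
  set K : ℝ := β * Xmax / (1 + h * Xmax) - δ with hKdef
  have hden : (0:ℝ) < 1 + h * Xmax := by positivity
  have hycont : ContinuousOn y (Set.Icc 0 τ) :=
    fun t ht => ((hy' t ht).continuousAt).continuousWithinAt
  have hrate : ∀ t ∈ Set.Icc (0:ℝ) τ, β * x t / (1 + h * x t) - δ ≤ K := by
    intro t ht
    obtain ⟨hx0, hxM⟩ := hxbnd t ht
    have hd : (0:ℝ) < 1 + h * x t := by positivity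
    have : β * x t / (1 + h * x t) ≤ β * Xmax / (1 + h * Xmax) := by
      rw [div_le_div_iff₀ hd hden]; nlinarith
    simp only [hKdef]; linarith
  have hrate' : ∀ t ∈ Set.Icc (0:ℝ) τ, -δ ≤ β * x t / (1 + h * x t) - δ := by
    intro t ht
    obtain ⟨hx0, hxM⟩ := hxbnd t ht
    have hd : (0:ℝ) < 1 + h * x t := by positivity
    have : 0 ≤ β * x t / (1 + h * x t) := by positivity
    linarith
  -- positivity of y on [0,τ]
  have hy0pos : 0 < y 0 := by rw [hy0]; nlinarith
  have hypos : ∀ t ∈ Set.Icc (0:ℝ) τ, 0 < y t := by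
    have hne : ∀ t ∈ Set.Icc (0:ℝ) τ, y t ≠ 0 := by
      set P : ℝ → ℝ := fun t => (y t)^2 * Real.exp (2*δ*t) with hPdef
      have hP' : ∀ t ∈ Set.Icc (0:ℝ) τ, HasDerivAt P
          (2 * y t ^ 1 * ((β * x t / (1 + h * x t) - δ) * y t) * Real.exp (2*δ*t)
            + (y t)^2 * (Real.exp (2*δ*t) * (2*δ))) t := by
        intro t ht
        have h1 := hy' t ht
        have h2 : HasDerivAt (fun s => (y s)^2)
            (2 * y t ^ 1 * ((β * x t / (1 + h * x t) - δ) * y t)) t := by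
          simpa using h1.fun_pow 2
        have h3 : HasDerivAt (fun s => Real.exp (2*δ*s)) (Real.exp (2*δ*t) * (2*δ)) t := by
          simpa using ((hasDerivAt_id t).const_mul (2*δ)).exp
        exact h2.mul h3
      have hmono : MonotoneOn P (Set.Icc 0 τ) := by
        apply monotoneOn_of_deriv_nonneg (convex_Icc 0 τ)
        · exact fun t ht => ((hP' t ht).continuousAt).continuousWithinAt
        · intro t ht
          rw [interior_Icc] at ht
          exact ((hP' t (Set.mem_Icc_of_Ioo ht)).differentiableAt).differentiableWithinAt
        · intro t ht
          rw [interior_Icc] at ht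
          have htI : t ∈ Set.Icc (0:ℝ) τ := Set.mem_Icc_of_Ioo ht
          rw [(hP' t htI).deriv]
          have hr := hrate' t htI
          have he : 0 < Real.exp (2*δ*t) := Real.exp_pos _
          set c := β * x t / (1 + h * x t) - δ with hc
          have h1 : 0 ≤ (c + δ) * (y t)^2 * Real.exp (2*δ*t) :=
            mul_nonneg (mul_nonneg (by linarith) (sq_nonneg _)) he.le
          nlinarith [sq_nonneg (y t)]
      intro t ht
      have h0I : (0:ℝ) ∈ Set.Icc (0:ℝ) τ := ⟨le_refl _, le_of_lt hτ⟩
      have := hmono h0I ht ht.1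
      have hP0 : 0 < P 0 := by
        simp only [hPdef]
        positivity
      have : 0 < P t := lt_of_lt_of_le hP0 this
      intro hz
      rw [hPdef] at this
      simp only [hz] at this
      norm_num at this
    intro t ht
    by_contra hle
    push_neg at hle
    have hlt : y t < 0 := lt_of_le_of_ne hle (hne t ht)
    have hsub : Set.Icc (0:ℝ) t ⊆ Set.Icc (0:ℝ) τ :=
      Set.Icc_subset_Icc le_rfl ht.2
    have hIVT := intermediate_value_Icc' ht.1 (hycont.mono hsub)
    have h0mem : (0:ℝ) ∈ Set.Icc (y t) (y 0) := ⟨le_of_lt hlt, le_of_lt hy0pos⟩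
    obtain ⟨s, hs, hys⟩ := hIVT h0mem
    exact hne s (hsub hs) hys
  -- W t = y t * exp (-K t) is antitone
  set W : ℝ → ℝ := fun t => y t * Real.exp (-K*t) with hWdef
  have hW' : ∀ t ∈ Set.Icc (0:ℝ) τ, HasDerivAt W
      ((β * x t / (1 + h * x t) - δ) * y t * Real.exp (-K*t)
        + y t * (Real.exp (-K*t) * (-K))) t := by
    intro t ht
    have h1 := hy' t ht
    have h3 : HasDerivAt (fun s => Real.exp (-K*s)) (Real.exp (-K*t) * (-K)) t := by
      simpa using ((hasDerivAt_id t).const_mul (-K)).exp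
    exact h1.mul h3
  have hanti : AntitoneOn W (Set.Icc 0 τ) := by
    apply antitoneOn_of_deriv_nonpos (convex_Icc 0 τ)
    · exact fun t ht => ((hW' t ht).continuousAt).continuousWithinAt
    · intro t ht
      rw [interior_Icc] at ht
      exact ((hW' t (Set.mem_Icc_of_Ioo ht)).differentiableAt).differentiableWithinAt
    · intro t ht
      rw [interior_Icc] at ht
      have htI : t ∈ Set.Icc (0:ℝ) τ := Set.mem_Icc_of_Ioo ht
      rw [(hW' t htI).deriv]
      have hr := hrate t htI
      have he : 0 < Real.exp (-K*t) := Real.exp_pos _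
      have hyp := hypos t htI
      set c := β * x t / (1 + h * x t) - δ with hc
      have h1 : 0 ≤ (K - c) * y t * Real.exp (-K*t) :=
        mul_nonneg (mul_nonneg (by linarith) hyp.le) he.le
      nlinarith
  have h0I : (0:ℝ) ∈ Set.Icc (0:ℝ) τ := ⟨le_refl _, le_of_lt hτ⟩
  have hτI : τ ∈ Set.Icc (0:ℝ) τ := ⟨le_of_lt hτ, le_refl _⟩
  have hWle : W τ ≤ W 0 := hanti h0I hτI (le_of_lt hτ)
  have hexp : Real.exp (-K*τ) * Real.exp (K*τ) = 1 := by
    rw [← Real.exp_add]; ring_nf; exact Real.exp_zero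
  have hmain : y τ ≤ (1 - θ) * Real.exp (K * τ) * y₀ := by
    have h1 : y τ * Real.exp (-K*τ) ≤ (1-θ) * y₀ := by
      simpa [hWdef, hy0] using hWle
    have he1 : 0 < Real.exp (K*τ) := Real.exp_pos _
    have := mul_le_mul_of_nonneg_right h1 (le_of_lt he1)
    calc y τ = y τ * Real.exp (-K*τ) * Real.exp (K*τ) := by
          rw [mul_assoc, hexp, mul_one]
      _ ≤ (1-θ) * y₀ * Real.exp (K*τ) := this
      _ = (1 - θ) * Real.exp (K * τ) * y₀ := by ring
  refine ⟨hmain, fun hθ => ?_⟩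
  have he1 : 0 < Real.exp (K*τ) := Real.exp_pos _
  have he2 : 0 < Real.exp (-(K*τ)) := Real.exp_pos _
  have h2 : (1 - θ) < Real.exp (-(K*τ)) := by linarith
  have h3 : (1 - θ) * Real.exp (K*τ) < 1 := by
    have := mul_lt_mul_of_pos_right h2 he1
    rwa [← Real.exp_add, neg_add_cancel, Real.exp_zero] at this
  calc y τ ≤ (1 - θ) * Real.exp (K * τ) * y₀ := hmain
    _ < 1 * y₀ := by exact mul_lt_mul_of_pos_right h3 hy₀
    _ = y₀ := one_mul y₀
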